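/- arXiv:2004.12279 — 6 statements merged into one kernel-verified Lean document; each statement's English description precedes it below -/
import Mathlib

section
/- Suppose $-1 < m < n$ with $m,n \neq 0$, and let $V(x) = -\frac{1}{m}x^{-m} + \frac{1}{n}x^{-n}$. Then for all $x$ with $0 < x < 1$, we have $V(1+x) < V(1-x)$. -/
theorem lj_asymmetry (m n : ℝ) (hm : -1 < m) (hmn : m < n) (hm0 : m ≠ 0) (hn0 : n ≠ 0)
    (V : ℝ → ℝ) (hV : ∀ x : ℝ, V x = -(1/m) * x ^ (-m) + (1/n) * x ^ (-n)) :
    ∀ x : ℝ, 0 < x → x < 1 → V (1 + x) < V (1 - x) := by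
  intro x hx0 hx1
  set f : ℝ → ℝ := fun y =>
    (-(1/m) * (1-y) ^ (-m) + (1/n) * (1-y) ^ (-n))
    - (-(1/m) * (1+y) ^ (-m) + (1/n) * (1+y) ^ (-n)) with hf
  set g : ℝ → ℝ := fun y =>
    (-(1-y) ^ (-(m+1)) + (1-y) ^ (-(n+1))) + (-(1+y) ^ (-(m+1)) + (1+y) ^ (-(n+1))) with hg
  have hder : ∀ y ∈ Set.Icc (0:ℝ) x, HasDerivAt f (g y) y := by
    intro y hy
    have hu : (0:ℝ) < 1 - y := by have := hy.2; linarith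
    have hv : (0:ℝ) < 1 + y := by have := hy.1; linarith
    have d1 : HasDerivAt (fun y : ℝ => 1 - y) (-1) y := by
      simpa using (hasDerivAt_id' y).const_sub (1:ℝ)
    have d2 : HasDerivAt (fun y : ℝ => 1 + y) (1:ℝ) y := by
      simpa using (hasDerivAt_id' y).const_add (1:ℝ)
    have h1 := (d1.rpow_const (p := -m) (Or.inl hu.ne')).const_mul (-(1/m))
    have h2 := (d1.rpow_const (p := -n) (Or.inl hu.ne')).const_mul (1/n)
    have h3 := (d2.rpow_const (p := -m) (Or.inl hv.ne')).const_mul (-(1/m))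
    have h4 := (d2.rpow_const (p := -n) (Or.inl hv.ne')).const_mul (1/n)
    have h5 := (h1.add h2).sub (h3.add h4)
    refine h5.congr_deriv ?_
    have e1 : -m - 1 = -(m+1) := by ring
    have e2 : -n - 1 = -(n+1) := by ring
    simp only [hg, e1, e2]
    field_simp
    ring
  have hgpos : ∀ y ∈ Set.Ioo (0:ℝ) x, 0 < g y := by
    intro y hy
    have hu0 : (0:ℝ) < 1 - y := by have := hy.2; linarith
    have hu1 : 1 - y < 1 := by have := hy.1; linarith
    have hv1 : (1:ℝ) < 1 + y := by have := hy.1; linarith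
    have hv0 : (0:ℝ) < 1 + y := by linarith
    set u := 1 - y with hu
    set v := 1 + y with hvdef
    have hq : (0:ℝ) < m + 1 := by linarith
    have hd : (0:ℝ) < n - m := by linarith
    have huvinv : v < u⁻¹ := by
      rw [show u⁻¹ = 1/u from (one_div u).symm, lt_div_iff₀ hu0]
      nlinarith [hy.1, hy.2]
    have hA : 1 < u ^ (-(m+1)) :=
      Real.one_lt_rpow_of_pos_of_lt_one_of_neg hu0 hu1 (by linarith)
    have hB : v ^ (-(n+1)) < 1 :=
      Real.rpow_lt_one_of_one_lt_of_neg hv1 (by linarith)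
    have hC : v ^ (n-m) < u ^ (-(n-m)) := by
      have e : u ^ (-(n-m)) = (u⁻¹) ^ (n-m) := by
        rw [Real.rpow_neg hu0.le, ← Real.inv_rpow hu0.le]
      rw [e]
      exact Real.rpow_lt_rpow hv0.le huvinv hd
    have hD : (1:ℝ) < v ^ (n-m) :=
      (Real.one_lt_rpow_iff_of_pos hv0).mpr (Or.inl ⟨hv1, hd⟩)
    have key : v ^ (-(n+1)) * (v ^ (n-m) - 1) < u ^ (-(m+1)) * (u ^ (-(n-m)) - 1) := by
      apply mul_lt_mul (by linarith) (by linarith) (by linarith) (by linarith)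
    have su : u ^ (-(n+1)) = u ^ (-(m+1)) * u ^ (-(n-m)) := by
      rw [← Real.rpow_add hu0]; ring_nf
    have sv : v ^ (-(m+1)) = v ^ (-(n+1)) * v ^ (n-m) := by
      rw [← Real.rpow_add hv0]; ring_nf
    simp only [hg]
    rw [show ((1:ℝ)-y) = u from rfl, show ((1:ℝ)+y) = v from rfl] at *
    nlinarith [key, su, sv]
  have hmono : StrictMonoOn f (Set.Icc 0 x) := by
    apply strictMonoOn_of_deriv_pos (convex_Icc 0 x)
    · exact fun y hy => (hder y hy).continuousAt.continuousWithinAt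
    · intro y hy
      rw [interior_Icc] at hy
      rw [(hder y (Set.mem_Icc_of_Ioo hy)).deriv]
      exact hgpos y hy
  have h0 : f 0 = 0 := by simp [hf]
  have hfx : 0 < f x := by
    have := hmono (Set.left_mem_Icc.mpr hx0.le) (Set.right_mem_Icc.mpr hx0.le) hx0
    rwa [h0] at this
  rw [hV (1+x), hV (1-x)]
  simp only [hf] at hfx
  linarith
end

section
/- Suppose $0 = m < n$ and let $V(x) = \log x + \frac{1}{n}x^{-n}$ for $x > 0$. Then for all $x$ with $0 < x < 1$, we have $V(1+x) < V(1-x)$. -/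
open Real

lemma lj_key (n a b : ℝ) (hn : 0 < n) (ha : 0 < a) (hb : 0 < b)
    (hsum : a + b = 2) (hab : a * b < 1) :
    1/a + 1/b < a ^ (-(n+1)) + b ^ (-(n+1)) := by
  have hA : (0:ℝ) < a ^ (n+1) := Real.rpow_pos_of_pos ha _
  have hB : (0:ℝ) < b ^ (n+1) := Real.rpow_pos_of_pos hb _
  -- convexity : 2 ≤ a^(n+1)+b^(n+1)
  have hcv := (convexOn_rpow (p := n+1) (by linarith)).2
    (Set.mem_Ici.mpr ha.le) (Set.mem_Ici.mpr hb.le)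
    (by norm_num : (0:ℝ) ≤ 1/2) (by norm_num : (0:ℝ) ≤ 1/2) (by norm_num)
  simp only [smul_eq_mul] at hcv
  have hmid : (1/2 : ℝ) * a + (1/2) * b = 1 := by linarith
  rw [hmid, Real.one_rpow] at hcv
  have h2 : (2:ℝ) ≤ a ^ (n+1) + b ^ (n+1) := by linarith
  -- (a*b)^n < 1
  have habn : (a*b) ^ n < 1 :=
    Real.rpow_lt_one (mul_nonneg ha.le hb.le) hab hn
  have hkey : 2 * (a*b) ^ n < a ^ (n+1) + b ^ (n+1) := by nlinarith
  -- rewrite both sides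
  have hne : a ^ (-(n+1)) + b ^ (-(n+1)) = (a ^ (n+1))⁻¹ + (b ^ (n+1))⁻¹ := by
    rw [Real.rpow_neg ha.le, Real.rpow_neg hb.le]
  rw [hne]
  have hlhs : 1/a + 1/b = 2 / (a*b) := by
    field_simp
    linarith
  rw [hlhs]
  have habpos : (0:ℝ) < a * b := mul_pos ha hb
  have hABprod : a ^ (n+1) * b ^ (n+1) = (a*b) ^ n * (a*b) := by
    rw [← Real.mul_rpow ha.le hb.le, Real.rpow_add habpos, Real.rpow_one]
  have hrhs : (a ^ (n+1))⁻¹ + (b ^ (n+1))⁻¹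
      = (a ^ (n+1) + b ^ (n+1)) / ((a*b) ^ n * (a*b)) := by
    rw [← hABprod]
    field_simp
    ring
  rw [hrhs, div_lt_div_iff₀ habpos (by positivity)]
  calc 2 * ((a*b)^n * (a*b)) = (2 * (a*b)^n) * (a*b) := by ring
    _ < (a ^ (n+1) + b ^ (n+1)) * (a*b) := by
        exact mul_lt_mul_of_pos_right hkey habpos

theorem lj_asymmetry_log (n : ℝ) (hn : 0 < n)
    (V : ℝ → ℝ) (hV : ∀ x : ℝ, V x = Real.log x + (1/n) * x ^ (-n)) :
    ∀ x : ℝ, 0 < x → x < 1 → V (1 + x) < V (1 - x) := by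
  intro x hx0 hx1
  set G : ℝ → ℝ := fun s =>
    (Real.log (1+s) + (1/n) * (1+s) ^ (-n)) -
    (Real.log (1-s) + (1/n) * (1-s) ^ (-n)) with hG
  -- derivative of G
  have hderiv : ∀ s : ℝ, 0 < 1 + s → 0 < 1 - s →
      HasDerivAt G (1/(1+s) - (1+s) ^ (-(n+1)) + (1/(1-s) - (1-s) ^ (-(n+1)))) s := by
    intro s hp hm
    have h1 : HasDerivAt (fun s : ℝ => 1 + s) 1 s := (hasDerivAt_id s).const_add 1
    have h2 : HasDerivAt (fun s : ℝ => 1 - s) (-1) s := (hasDerivAt_id s).const_sub 1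
    have hlog1 : HasDerivAt (fun s : ℝ => Real.log (1+s)) (1/(1+s)) s := by
      have := (Real.hasDerivAt_log hp.ne').comp s h1
      simpa [one_div, Function.comp_def] using this
    have hlog2 : HasDerivAt (fun s : ℝ => Real.log (1-s)) (-(1/(1-s))) s := by
      have := (Real.hasDerivAt_log hm.ne').comp s h2
      simpa [one_div, Function.comp_def] using this
    have hr1 : HasDerivAt (fun s : ℝ => (1+s) ^ (-n)) (-n * (1+s) ^ (-n-1)) s := by
      have := (Real.hasDerivAt_rpow_const (p := -n) (Or.inl hp.ne')).comp s h1
      simpa [Function.comp_def] using this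
    have hr2 : HasDerivAt (fun s : ℝ => (1-s) ^ (-n)) (n * (1-s) ^ (-n-1)) s := by
      have := (Real.hasDerivAt_rpow_const (p := -n) (Or.inl hm.ne')).comp s h2
      have h' : -n * (1-s) ^ (-n-1) * -1 = n * (1-s) ^ (-n-1) := by ring
      simpa [h', Function.comp_def] using this
    have := ((hlog1.add (hr1.const_mul (1/n))).sub (hlog2.add (hr2.const_mul (1/n))))
    have heq : 1/(1+s) + (1/n) * (-n * (1+s) ^ (-n-1)) -
        (-(1/(1-s)) + (1/n) * (n * (1-s) ^ (-n-1)))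
        = 1/(1+s) - (1+s) ^ (-(n+1)) + (1/(1-s) - (1-s) ^ (-(n+1))) := by
      have hn' : n ≠ 0 := hn.ne'
      have e1 : -(n+1) = -n-1 := by ring
      rw [e1]
      field_simp
      ring
    rw [heq] at this
    exact this
  -- G is strictly decreasing on [0, x]
  have hanti : StrictAntiOn G (Set.Icc 0 x) := by
    apply strictAntiOn_of_deriv_neg (convex_Icc 0 x)
    · intro s hs
      have hp : 0 < 1 + s := by linarith [hs.1]
      have hm : 0 < 1 - s := by linarith [hs.2]
      exact (hderiv s hp hm).continuousAt.continuousWithinAt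
    · intro s hs
      rw [interior_Icc] at hs
      have hp : 0 < 1 + s := by linarith [hs.1]
      have hm : 0 < 1 - s := by linarith [hs.2, hx1]
      rw [(hderiv s hp hm).deriv]
      have hk := lj_key n (1-s) (1+s) hn hm hp (by ring) (by nlinarith [hs.1, hs.2])
      linarith
  have hG0 : G 0 = 0 := by simp [hG]
  have hGx : G x < 0 := by
    have := hanti (Set.left_mem_Icc.mpr hx0.le) (Set.right_mem_Icc.mpr hx0.le) hx0
    rwa [hG0] at this
  rw [hV, hV]
  simpa [hG] using hGx
end

section
/- Let $0 < z < 1 < y$ and $-1 < m < n$. Then $\frac{y^{n+2} - z^{n+2}}{y^{m+2} - z^{m+2}} > y^{n-m} > 1$. -/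
theorem lj_key_inequality (y z m n : ℝ) (hz : 0 < z) (hz1 : z < 1) (hy : 1 < y)
    (hm : -1 < m) (hmn : m < n) :
    (y ^ (n + 2) - z ^ (n + 2)) / (y ^ (m + 2) - z ^ (m + 2)) > y ^ (n - m) ∧
    y ^ (n - m) > 1 := by
  have hy0 : (0:ℝ) < y := lt_trans one_pos hy
  have hnm : 0 < n - m := sub_pos.mpr hmn
  have hm2 : 0 < m + 2 := by linarith
  have h2 : y ^ (n - m) > 1 := Real.one_lt_rpow_iff_of_pos hy0 |>.mpr (Or.inl ⟨hy, hnm⟩)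
  have hzlt : z ^ (n - m) < 1 := Real.rpow_lt_one hz.le hz1 hnm
  have hy1 : (1:ℝ) < y ^ (m + 2) := Real.one_lt_rpow_iff_of_pos hy0 |>.mpr (Or.inl ⟨hy, hm2⟩)
  have hz2 : z ^ (m + 2) < 1 := Real.rpow_lt_one hz.le hz1 hm2
  have hzpos : 0 < z ^ (m + 2) := Real.rpow_pos_of_pos hz _
  have hden : 0 < y ^ (m + 2) - z ^ (m + 2) := by linarith
  have hysplit : y ^ (n + 2) = y ^ (n - m) * y ^ (m + 2) := by
    rw [← Real.rpow_add hy0]; ring_nf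
  have hzsplit : z ^ (n + 2) = z ^ (n - m) * z ^ (m + 2) := by
    rw [← Real.rpow_add hz]; ring_nf
  refine ⟨?_, h2⟩
  rw [gt_iff_lt, lt_div_iff₀ hden, hysplit, hzsplit]
  nlinarith [mul_pos hzpos (sub_pos.mpr (lt_trans hzlt h2))]
end

section
/- Suppose $-1 < m < n$, $m,n \neq 0$, with pair potential $V(x) = -\frac{1}{m}x^{-m} + \frac{1}{n}x^{-n}$. For $N \geq 2$, $0 \leq \alpha \leq 1$, define the energy $E[Y_N] = \sum_{1 \le i < j \le N,\ j - i \le \lfloor N^\alpha \rfloor} V(y_j - y_i)$ on configurations $y_1 < \cdots < y_N$. If $X_N = (x_1, \ldots, x_N)$ is a critical point of $E$ (i.e., all partial derivatives $\partial E/\partial x_i$ vanish), then $x_{i+1} - x_i \le 1$ for every $i = 1, \ldots, N-1$. -/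
/-- The truncated pairwise interaction energy of the generalized LJ model:
steps `i < j` interact iff `j - i ≤ ⌊N^α⌋`. -/
noncomputable def ljEnergy (N : ℕ) (α : ℝ) (V : ℝ → ℝ) (y : Fin N → ℝ) : ℝ :=
  ∑ p ∈ Finset.univ.filter
      (fun p : Fin N × Fin N => p.1 < p.2 ∧ (p.2 : ℕ) - (p.1 : ℕ) ≤ ⌊(N : ℝ) ^ α⌋₊),
    V (y p.2 - y p.1)

theorem terrace_length_upper_bound
    (m n : ℝ) (hm : -1 < m) (hmn : m < n) (hm0 : m ≠ 0) (hn0 : n ≠ 0)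
    (V : ℝ → ℝ) (hV : ∀ x : ℝ, V x = -(1/m) * x ^ (-m) + (1/n) * x ^ (-n))
    (N : ℕ) (hN : 2 ≤ N) (α : ℝ) (hα0 : 0 ≤ α) (hα1 : α ≤ 1)
    (x : Fin N → ℝ) (hx : StrictMono x)
    (hcrit : ∀ i : Fin N,
      HasDerivAt (fun t => ljEnergy N α V (Function.update x i t)) 0 (x i)) :
    ∀ i : Fin N, ∀ hi : (i : ℕ) + 1 < N, x ⟨(i : ℕ) + 1, hi⟩ - x i ≤ 1 := by
  classical
  intro i0 hi0
  by_contra hgt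
  push_neg at hgt
  set W : ℝ → ℝ := fun y => y ^ (-m - 1) - y ^ (-n - 1) with hWdef
  have hWpos : ∀ y : ℝ, 1 < y → 0 < W y := by
    intro y hy
    have h : y ^ (-n - 1) < y ^ (-m - 1) :=
      (Real.rpow_lt_rpow_left_iff hy).mpr (by linarith)
    simpa [hWdef, sub_pos] using h
  have hVd : ∀ y : ℝ, 0 < y → HasDerivAt V (W y) y := by
    intro y hy
    have hVeq : V = fun z => -(1/m) * z ^ (-m) + (1/n) * z ^ (-n) := funext hV
    have h1 : HasDerivAt (fun z : ℝ => z ^ (-m)) (-m * y ^ (-m - 1)) y :=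
      Real.hasDerivAt_rpow_const (Or.inl hy.ne')
    have h2 : HasDerivAt (fun z : ℝ => z ^ (-n)) (-n * y ^ (-n - 1)) y :=
      Real.hasDerivAt_rpow_const (Or.inl hy.ne')
    have h := (h1.const_mul (-(1/m))).fun_add (h2.const_mul (1/n))
    rw [hVeq]
    refine h.congr_deriv ?_
    simp only [hWdef]
    field_simp
    ring
  set P : Finset (Fin N × Fin N) := Finset.univ.filter
      (fun p : Fin N × Fin N => p.1 < p.2 ∧ (p.2 : ℕ) - (p.1 : ℕ) ≤ ⌊(N : ℝ) ^ α⌋₊) with hPdef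
  set d : Fin N → Fin N × Fin N → ℝ := fun i p =>
      (if p.2 = i then W (x p.2 - x p.1) else 0) -
      (if p.1 = i then W (x p.2 - x p.1) else 0) with hddef
  have hD : ∀ i : Fin N, HasDerivAt (fun t => ljEnergy N α V (Function.update x i t))
      (∑ p ∈ P, d i p) (x i) := by
    intro i
    have key : ∀ p ∈ P, HasDerivAt
        (fun t => V (Function.update x i t p.2 - Function.update x i t p.1)) (d i p) (x i) := by
      intro p hp
      have hplt : p.1 < p.2 := (Finset.mem_filter.mp hp).2.1
      by_cases h1 : p.1 = i
      · have h2 : p.2 ≠ i := fun h => absurd (h1.trans h.symm) (ne_of_lt hplt)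
        have hpos : 0 < x p.2 - x i := by
          rw [← h1]; exact sub_pos.mpr (hx hplt)
        have hfe : (fun t => V (Function.update x i t p.2 - Function.update x i t p.1))
            = fun t : ℝ => V (x p.2 - t) := by
          funext t
          rw [Function.update_of_ne h2, h1, Function.update_self]
        have hval : d i p = W (x p.2 - x i) * (-1) := by
          simp only [hddef, if_neg h2, if_pos h1, h1, if_true]
          ring
        rw [hfe, hval]
        exact (hVd _ hpos).comp (x i) ((hasDerivAt_id (x i)).const_sub (x p.2))
      · by_cases h2 : p.2 = i
        · have hpos : 0 < x i - x p.1 := by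
            rw [← h2]; exact sub_pos.mpr (hx hplt)
          have hfe : (fun t => V (Function.update x i t p.2 - Function.update x i t p.1))
              = fun t : ℝ => V (t - x p.1) := by
            funext t
            rw [Function.update_of_ne h1, h2, Function.update_self]
          have hval : d i p = W (x i - x p.1) * 1 := by
            simp only [hddef, if_pos h2, if_neg h1, h2, if_true]
            ring
          rw [hfe, hval]
          exact (hVd _ hpos).comp (x i) ((hasDerivAt_id (x i)).sub_const (x p.1))
        · have hfe : (fun t => V (Function.update x i t p.2 - Function.update x i t p.1))
              = fun _ : ℝ => V (x p.2 - x p.1) := by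
            funext t
            rw [Function.update_of_ne h1, Function.update_of_ne h2]
          have hval : d i p = 0 := by
            simp only [hddef, if_neg h1, if_neg h2]
            ring
          rw [hfe, hval]
          exact hasDerivAt_const _ _
    exact HasDerivAt.fun_sum key
  have hzero : ∀ i : Fin N, ∑ p ∈ P, d i p = 0 := fun i => (hD i).unique (hcrit i)
  set T : Finset (Fin N) := Finset.univ.filter (fun i => i0 < i) with hTdef
  have hswap : ∑ p ∈ P, ∑ i ∈ T, d i p = 0 := by
    rw [Finset.sum_comm]
    simp [hzero]
  have hinner : ∀ p ∈ P, ∑ i ∈ T, d i p =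
      (if i0 < p.2 then W (x p.2 - x p.1) else 0) -
      (if i0 < p.1 then W (x p.2 - x p.1) else 0) := by
    intro p _
    simp only [hddef]
    rw [Finset.sum_sub_distrib, Finset.sum_ite_eq, Finset.sum_ite_eq]
    simp [hTdef]
  rw [Finset.sum_congr rfl hinner] at hswap
  have hkey : ∀ p : Fin N × Fin N, p.1 ≤ i0 → i0 < p.2 → 1 < x p.2 - x p.1 := by
    intro p hle hlt
    have h1 : x p.1 ≤ x i0 := hx.monotone hle
    have h2 : x ⟨(i0 : ℕ) + 1, hi0⟩ ≤ x p.2 := by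
      apply hx.monotone
      rw [Fin.le_def]
      exact hlt
    linarith
  have hpos : 0 < ∑ p ∈ P,
      ((if i0 < p.2 then W (x p.2 - x p.1) else 0) -
       (if i0 < p.1 then W (x p.2 - x p.1) else 0)) := by
    apply Finset.sum_pos'
    · intro p hp
      have hplt : p.1 < p.2 := (Finset.mem_filter.mp hp).2.1
      by_cases ha : i0 < p.1
      · rw [if_pos (ha.trans hplt), if_pos ha]; simp
      · rw [if_neg ha]
        by_cases hb : i0 < p.2
        · rw [if_pos hb]
          have := hWpos _ (hkey p (not_lt.mp ha) hb)
          linarith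
        · rw [if_neg hb]; simp
    · refine ⟨(i0, ⟨(i0 : ℕ) + 1, hi0⟩), ?_, ?_⟩
      · rw [hPdef, Finset.mem_filter]
        refine ⟨Finset.mem_univ _, ?_, ?_⟩
        · rw [Fin.lt_def]; exact Nat.lt_succ_self _
        · simp only
          have hN1 : (1 : ℝ) ≤ (N : ℝ) := by exact_mod_cast Nat.one_le_of_lt hN
          have : 1 ≤ ⌊(N : ℝ) ^ α⌋₊ := by
            apply Nat.le_floor
            simpa using Real.one_le_rpow hN1 hα0
          omega
      · have hlt2 : i0 < (⟨(i0 : ℕ) + 1, hi0⟩ : Fin N) := by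
          rw [Fin.lt_def]; exact Nat.lt_succ_self _
        simp only [if_pos hlt2, if_neg (lt_irrefl i0)]
        have := hWpos _ hgt
        linarith
  linarith [hswap, hpos]
end

section
/- Let $-1 < m < n$, $1 < n$, $m, n \neq 0$, $0 < \alpha \le 1$, and $V(x) = -\frac{1}{m}x^{-m} + \frac{1}{n}x^{-n}$. There exist constants $C > 0$ and $N_0$ such that for all $N > N_0$: if $X_N$ is a critical point of the truncated energy $E$ and $\lambda_N = \min_i (x_{i+1} - x_i) < 1/2$, then $\lambda_N \ge C N^{-2\alpha/(n+1)}$. In particular $\lambda_N \gg N^{-\alpha}$ as $N \to \infty$. -/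
lemma ljAux_hasDerivV (m n : ℝ) (hm0 : m ≠ 0) (hn0 : n ≠ 0)
    (V : ℝ → ℝ) (hV : ∀ x : ℝ, V x = -(1/m) * x ^ (-m) + (1/n) * x ^ (-n))
    (ξ : ℝ) (hξ : 0 < ξ) :
    HasDerivAt V (ξ ^ (-m-1) - ξ ^ (-n-1)) ξ := by
  have hVf : V = fun x => -(1/m) * x ^ (-m) + (1/n) * x ^ (-n) := funext hV
  rw [hVf]
  have h1 : HasDerivAt (fun x : ℝ => x ^ (-m)) (-m * ξ ^ (-m-1)) ξ :=
    Real.hasDerivAt_rpow_const (Or.inl hξ.ne')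
  have h2 : HasDerivAt (fun x : ℝ => x ^ (-n)) (-n * ξ ^ (-n-1)) ξ :=
    Real.hasDerivAt_rpow_const (Or.inl hξ.ne')
  have := (h1.const_mul (-(1/m))).fun_add (h2.const_mul (1/n))
  refine this.congr_deriv ?_
  field_simp
  ring

lemma ljAux_energy_hasDeriv (N : ℕ) (α : ℝ) (V g : ℝ → ℝ)
    (hV' : ∀ ξ : ℝ, 0 < ξ → HasDerivAt V (g ξ) ξ)
    (x : Fin N → ℝ) (hx : StrictMono x) (j : Fin N) :
    HasDerivAt (fun t => ljEnergy N α V (Function.update x j t))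
      (∑ p ∈ Finset.univ.filter
        (fun p : Fin N × Fin N => p.1 < p.2 ∧ (p.2 : ℕ) - (p.1 : ℕ) ≤ ⌊(N : ℝ) ^ α⌋₊),
        ((if p.2 = j then g (x p.2 - x p.1) else 0)
          - (if p.1 = j then g (x p.2 - x p.1) else 0))) (x j) := by
  unfold ljEnergy
  apply HasDerivAt.fun_sum
  intro p hp
  simp only [Finset.mem_filter, Finset.mem_univ, true_and] at hp
  have hd : 0 < x p.2 - x p.1 := sub_pos.mpr (hx hp.1)
  by_cases h2 : p.2 = j
  · subst h2
    have h1 : p.1 ≠ p.2 := ne_of_lt hp.1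
    have hfun : (fun t => V (Function.update x p.2 t p.2 - Function.update x p.2 t p.1))
        = fun t : ℝ => V (t - x p.1) := by
      funext t; simp [Function.update_self, Function.update_of_ne h1]
    rw [hfun, if_pos rfl, if_neg h1, sub_zero]
    have : HasDerivAt (fun t : ℝ => V (t - x p.1)) (g (x p.2 - x p.1) * 1) (x p.2) :=
      (hV' _ hd).comp (x p.2) ((hasDerivAt_id (x p.2)).sub_const (x p.1))
    simpa using this
  · by_cases h1 : p.1 = j
    · subst h1
      have h2' : p.2 ≠ p.1 := h2
      have hfun : (fun t => V (Function.update x p.1 t p.2 - Function.update x p.1 t p.1))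
          = fun t : ℝ => V (x p.2 - t) := by
        funext t; simp [Function.update_self, Function.update_of_ne h2']
      rw [hfun, if_neg h2, if_pos rfl, zero_sub]
      have : HasDerivAt (fun t : ℝ => V (x p.2 - t)) (g (x p.2 - x p.1) * (-1)) (x p.1) :=
        (hV' _ hd).comp (x p.1) ((hasDerivAt_id (x p.1)).const_sub (x p.2))
      simpa using this
    · have hfun : (fun t => V (Function.update x j t p.2 - Function.update x j t p.1))
          = fun _ : ℝ => V (x p.2 - x p.1) := by
        funext t; simp [Function.update_of_ne h1, Function.update_of_ne h2]
      rw [hfun, if_neg h2, if_neg h1, sub_zero]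
      exact hasDerivAt_const _ _

lemma ljAux_cancel_sum {N : ℕ} (S : Finset (Fin N × Fin N)) (hS : ∀ p ∈ S, p.1 < p.2)
    (W : Fin N × Fin N → ℝ) (i : Fin N)
    (hD : ∀ j : Fin N,
      (∑ p ∈ S, ((if p.2 = j then W p else 0) - (if p.1 = j then W p else 0))) = 0) :
    (∑ p ∈ S.filter (fun p => p.1 ≤ i ∧ i < p.2), W p) = 0 := by
  have key : (∑ j ∈ Finset.univ.filter (fun j : Fin N => j ≤ i),
      ∑ p ∈ S, ((if p.2 = j then W p else 0) - (if p.1 = j then W p else 0))) = 0 := by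
    simp [hD]
  rw [Finset.sum_comm] at key
  have swap : (∑ p ∈ S, ∑ j ∈ Finset.univ.filter (fun j : Fin N => j ≤ i),
      ((if p.2 = j then W p else 0) - (if p.1 = j then W p else 0)))
      = ∑ p ∈ S, ((if p.2 ≤ i then W p else 0) - (if p.1 ≤ i then W p else 0)) :=
    Finset.sum_congr rfl (fun p _ => by simp [Finset.sum_sub_distrib, Finset.sum_ite_eq])
  rw [swap] at key
  have key2 := key
  have key3 : (∑ p ∈ S, ((if p.2 ≤ i then W p else 0) - (if p.1 ≤ i then W p else 0)))
      = -∑ p ∈ S.filter (fun p => p.1 ≤ i ∧ i < p.2), W p := by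
    rw [Finset.sum_filter, ← Finset.sum_neg_distrib]
    apply Finset.sum_congr rfl
    intro p hp
    have hlt := hS p hp
    by_cases h2 : p.2 ≤ i
    · have h1 : p.1 ≤ i := le_of_lt (lt_of_lt_of_le hlt h2)
      rw [if_pos h2, if_pos h1, if_neg (by push_neg; intro _; exact h2)]
      ring
    · by_cases h1 : p.1 ≤ i
      · rw [if_neg h2, if_pos h1, if_pos ⟨h1, not_le.mp h2⟩]
        ring
      · rw [if_neg h2, if_neg h1, if_neg (by tauto)]
        ring
  have := key2.symm.trans key3
  linarith [this]

lemma ljAux_Vp_le_one (m n : ℝ) (hm : -1 < m) (hmn : m < n) (ξ : ℝ) (hξ : 0 < ξ) :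
    ξ ^ (-m-1) - ξ ^ (-n-1) ≤ 1 := by
  rcases le_or_gt 1 ξ with h | h
  · have h1 : ξ ^ (-m-1) ≤ 1 :=
      Real.rpow_le_one_of_one_le_of_nonpos h (by linarith)
    have h2 : (0:ℝ) ≤ ξ ^ (-n-1) := Real.rpow_nonneg (le_of_lt hξ) _
    linarith
  · have h1 : ξ ^ (-m-1) ≤ ξ ^ (-n-1) :=
      Real.rpow_le_rpow_of_exponent_ge hξ (le_of_lt h) (by linarith)
    linarith

lemma ljAux_card_crossing {N : ℕ} (K : ℕ) (i : Fin N) :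
    ((Finset.univ.filter
      (fun p : Fin N × Fin N => p.1 < p.2 ∧ (p.2 : ℕ) - (p.1 : ℕ) ≤ K)).filter
      (fun p => p.1 ≤ i ∧ i < p.2)).card ≤ K * K := by
  refine le_trans (Finset.card_le_card_of_injOn
    (fun p : Fin N × Fin N => (((i:ℕ) - (p.1:ℕ)), ((p.2:ℕ) - (i:ℕ) - 1)))
    (t := Finset.range K ×ˢ Finset.range K) ?_ ?_) (by simp)
  · intro p hp
    simp only [Finset.mem_coe, Finset.mem_filter, Finset.mem_univ, true_and] at hp
    obtain ⟨⟨hlt, hK⟩, h1, h2⟩ := hp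
    have hlt' : (p.1 : ℕ) < (p.2 : ℕ) := hlt
    have h1' : (p.1 : ℕ) ≤ (i : ℕ) := h1
    have h2' : (i : ℕ) < (p.2 : ℕ) := h2
    simp only [Finset.mem_coe, Finset.mem_product, Finset.mem_range]
    omega
  · intro p hp q hq hfq
    simp only [Finset.mem_coe, Finset.mem_filter, Finset.mem_univ, true_and] at hp hq
    obtain ⟨⟨hlt, hK⟩, h1, h2⟩ := hp
    obtain ⟨⟨hlt2, hK2⟩, h12, h22⟩ := hq
    have h1' : (p.1 : ℕ) ≤ (i : ℕ) := h1
    have h2' : (i : ℕ) < (p.2 : ℕ) := h2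
    have h12' : (q.1 : ℕ) ≤ (i : ℕ) := h12
    have h22' : (i : ℕ) < (q.2 : ℕ) := h22
    have hlt1' : (p.1 : ℕ) < (p.2 : ℕ) := hlt
    have hlt2' : (q.1 : ℕ) < (q.2 : ℕ) := hlt2
    simp only [Prod.mk.injEq] at hfq
    have e1 : (p.1 : ℕ) = (q.1 : ℕ) := by omega
    have e2 : (p.2 : ℕ) = (q.2 : ℕ) := by omega
    exact Prod.ext (Fin.ext e1) (Fin.ext e2)

theorem minimal_terrace_weak_lower_bound
    (m n : ℝ) (hm : -1 < m) (hmn : m < n) (hn1 : 1 < n) (hm0 : m ≠ 0) (hn0 : n ≠ 0)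
    (α : ℝ) (hα0 : 0 < α) (hα1 : α ≤ 1)
    (V : ℝ → ℝ) (hV : ∀ x : ℝ, V x = -(1/m) * x ^ (-m) + (1/n) * x ^ (-n)) :
    ∃ C > (0 : ℝ), ∃ N₀ : ℕ, ∀ N : ℕ, N > N₀ →
      ∀ x : Fin N → ℝ, StrictMono x →
      (∀ i : Fin N,
        HasDerivAt (fun t => ljEnergy N α V (Function.update x i t)) 0 (x i)) →
      ∀ lam : ℝ,
        (∀ i : Fin N, ∀ hi : (i : ℕ) + 1 < N, lam ≤ x ⟨(i : ℕ) + 1, hi⟩ - x i) →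
        (∃ i : Fin N, ∃ hi : (i : ℕ) + 1 < N, x ⟨(i : ℕ) + 1, hi⟩ - x i = lam) →
        lam < 1/2 →
        lam ≥ C * (N : ℝ) ^ (-(2 * α) / (n + 1)) := by
  have hc1 : (0:ℝ) < 1 - (1/2:ℝ) ^ (n - m) := by
    have : (1/2:ℝ) ^ (n-m) < 1 :=
      Real.rpow_lt_one (by norm_num) (by norm_num) (by linarith)
    linarith
  refine ⟨(1 - (1/2:ℝ)^(n-m)) ^ ((1:ℝ)/(n+1)), Real.rpow_pos_of_pos hc1 _, 0, ?_⟩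
  intro N hN x hx hcrit lam hlam hex hhalf
  obtain ⟨i, hi, hieq⟩ := hex
  have hNpos : (0:ℝ) < N := by exact_mod_cast hN
  have hN1 : (1:ℝ) ≤ N := by exact_mod_cast hN
  have hii1 : i < (⟨(i:ℕ)+1, hi⟩ : Fin N) := by
    rw [Fin.lt_def]; simp
  have hlam0 : 0 < lam := by
    rw [← hieq]; exact sub_pos.mpr (hx hii1)
  set K : ℕ := ⌊(N:ℝ)^α⌋₊ with hK
  set g : ℝ → ℝ := fun ξ => ξ^(-m-1) - ξ^(-n-1) with hg
  have hV' : ∀ ξ : ℝ, 0 < ξ → HasDerivAt V (g ξ) ξ :=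
    fun ξ hξ => ljAux_hasDerivV m n hm0 hn0 V hV ξ hξ
  set S : Finset (Fin N × Fin N) := Finset.univ.filter
    (fun p : Fin N × Fin N => p.1 < p.2 ∧ (p.2 : ℕ) - (p.1 : ℕ) ≤ K) with hSdef
  have hD : ∀ j : Fin N, (∑ p ∈ S, ((if p.2 = j then g (x p.2 - x p.1) else 0)
      - (if p.1 = j then g (x p.2 - x p.1) else 0))) = 0 :=
    fun j => (ljAux_energy_hasDeriv N α V g hV' x hx j).unique (hcrit j)
  have hcancel := ljAux_cancel_sum S
    (fun p hp => (Finset.mem_filter.mp hp).2.1)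
    (fun p => g (x p.2 - x p.1)) i hD
  set q0 : Fin N × Fin N := (i, ⟨(i:ℕ)+1, hi⟩) with hq0def
  have hK1 : 1 ≤ K := by
    rw [hK]
    apply Nat.le_floor
    rw [Nat.cast_one]
    calc (1:ℝ) = 1 ^ α := (Real.one_rpow α).symm
    _ ≤ (N:ℝ) ^ α := Real.rpow_le_rpow (by norm_num) hN1 hα0.le
  have hq0 : q0 ∈ S.filter (fun p => p.1 ≤ i ∧ i < p.2) := by
    refine Finset.mem_filter.mpr ⟨Finset.mem_filter.mpr ⟨Finset.mem_univ _, hii1, ?_⟩,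
      le_refl i, hii1⟩
    show ((i:ℕ)+1) - (i:ℕ) ≤ K
    omega
  have hsplit := Finset.add_sum_erase (S.filter (fun p => p.1 ≤ i ∧ i < p.2))
    (fun p => g (x p.2 - x p.1)) hq0
  rw [hcancel] at hsplit
  have hgval : g (x q0.2 - x q0.1) = lam^(-m-1) - lam^(-n-1) := by
    have hxe : x q0.2 - x q0.1 = lam := hieq
    rw [hxe]
  have hbound : ∑ p ∈ ((S.filter (fun p => p.1 ≤ i ∧ i < p.2)).erase q0),
      g (x p.2 - x p.1)
      ≤ (((S.filter (fun p => p.1 ≤ i ∧ i < p.2)).erase q0).card : ℝ) := by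
    have := Finset.sum_le_card_nsmul ((S.filter (fun p => p.1 ≤ i ∧ i < p.2)).erase q0)
      (fun p => g (x p.2 - x p.1)) 1 (fun p hp => by
        have hp' := Finset.mem_of_mem_erase hp
        have hlt : p.1 < p.2 := (Finset.mem_filter.mp (Finset.mem_filter.mp hp').1).2.1
        exact ljAux_Vp_le_one m n hm hmn _ (sub_pos.mpr (hx hlt)))
    simpa [nsmul_eq_mul] using this
  have hcard : ((((S.filter (fun p => p.1 ≤ i ∧ i < p.2)).erase q0).card : ℕ) : ℝ)
      ≤ (N:ℝ)^(2*α) := by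
    have h1 : ((S.filter (fun p => p.1 ≤ i ∧ i < p.2)).erase q0).card ≤ K*K :=
      le_trans (Finset.card_le_card (Finset.erase_subset _ _)) (ljAux_card_crossing K i)
    have hKle : (K:ℝ) ≤ (N:ℝ)^α := Nat.floor_le (Real.rpow_nonneg hNpos.le α)
    have hK0 : (0:ℝ) ≤ (K:ℝ) := Nat.cast_nonneg _
    calc ((((S.filter (fun p => p.1 ≤ i ∧ i < p.2)).erase q0).card : ℕ) : ℝ)
        ≤ ((K*K : ℕ) : ℝ) := by exact_mod_cast h1
      _ = (K:ℝ)*(K:ℝ) := by push_cast; ring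
      _ ≤ (N:ℝ)^α * (N:ℝ)^α :=
          mul_le_mul hKle hKle hK0 (Real.rpow_nonneg hNpos.le α)
      _ = (N:ℝ)^(2*α) := by rw [← Real.rpow_add hNpos]; ring_nf
  have hmain : lam^(-n-1) - lam^(-m-1) ≤ (N:ℝ)^(2*α) := by
    rw [hgval] at hsplit
    linarith [hsplit, hbound, hcard]
  have h2 : lam^(-m-1) ≤ lam^(-n-1) * (1/2:ℝ)^(n-m) := by
    have e : lam^(-m-1) = lam^(-n-1) * lam^(n-m) := by
      rw [← Real.rpow_add hlam0]; ring_nf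
    rw [e]
    exact mul_le_mul_of_nonneg_left
      (Real.rpow_le_rpow hlam0.le hhalf.le (by linarith))
      (Real.rpow_nonneg hlam0.le _)
  have h3 : (1 - (1/2:ℝ)^(n-m)) * lam^(-(n+1)) ≤ (N:ℝ)^(2*α) := by
    have e : lam^(-(n+1)) = lam^(-n-1) := by ring_nf
    rw [e]
    nlinarith [hmain, h2]
  have hppos : 0 < lam^(n+1) := Real.rpow_pos_of_pos hlam0 _
  have hNa : (0:ℝ) < (N:ℝ)^(2*α) := Real.rpow_pos_of_pos hNpos _
  have hinv : lam^(-(n+1)) = (lam^(n+1))⁻¹ := Real.rpow_neg hlam0.le (n+1)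
  have hlamp : (1 - (1/2:ℝ)^(n-m)) * (N:ℝ)^(-(2*α)) ≤ lam^(n+1) := by
    rw [Real.rpow_neg hNpos.le]
    rw [hinv] at h3
    have h4 : (1 - (1/2:ℝ)^(n-m)) ≤ (N:ℝ)^(2*α) * lam^(n+1) := by
      have := mul_le_mul_of_nonneg_right h3 hppos.le
      rw [mul_assoc, inv_mul_cancel₀ hppos.ne', mul_one] at this
      linarith
    have := mul_le_mul_of_nonneg_right h4 (inv_nonneg.mpr hNa.le)
    rw [mul_comm ((N:ℝ)^(2*α)) (lam^(n+1)), mul_assoc, mul_inv_cancel₀ hNa.ne',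
      mul_one] at this
    exact this
  have hn1p : (0:ℝ) < n + 1 := by linarith
  rw [ge_iff_le, ← Real.rpow_le_rpow_iff (by positivity) hlam0.le hn1p,
    Real.mul_rpow (Real.rpow_nonneg hc1.le _) (Real.rpow_nonneg hNpos.le _),
    ← Real.rpow_mul hc1.le, ← Real.rpow_mul hNpos.le]
  have e1 : (1:ℝ)/(n+1)*(n+1) = 1 := by field_simp
  have e2 : (-(2*α))/(n+1)*(n+1) = -(2*α) := by field_simp
  rw [e1, e2, Real.rpow_one]
  exact hlamp
end

section
/- Let $0 < m < 1$, $N \ge 2$ an integer, $0 < \alpha \le 1$, and $l_0 > 0$. Then $\frac{1}{m} l_0^{-m}\left(\sum_{k=1}^{\lfloor N^\alpha\rfloor} k^{1-m} - N \sum_{k=1}^{\lfloor N^\alpha\rfloor} k^{-m}\right) \le -\frac{1}{m(1-m)(2-m)} l_0^{-m} N^{1 + \alpha(1-m)} + \frac{3}{m(1-m)} l_0^{-m} N$. -/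
private lemma bern_le (p x : ℝ) (hp0 : 0 ≤ p) (hp1 : p ≤ 1) (hx : 1 ≤ x) :
    (x + 1) ^ p ≤ x ^ p + p * x ^ (p - 1) := by
  have hx0 : (0:ℝ) < x := by linarith
  have h1x : (0:ℝ) ≤ 1/x := by positivity
  have hb := rpow_one_add_le_one_add_mul_self (s := 1/x) (by linarith) hp0 hp1
  have hmul : (x + 1) ^ p = x ^ p * (1 + 1/x) ^ p := by
    rw [← Real.mul_rpow hx0.le (by positivity)]
    congr 1; field_simp
  calc (x + 1) ^ p = x ^ p * (1 + 1/x) ^ p := hmul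
    _ ≤ x ^ p * (1 + p * (1/x)) :=
        mul_le_mul_of_nonneg_left hb (Real.rpow_nonneg hx0.le p)
    _ = x ^ p + p * x ^ (p - 1) := by
        rw [Real.rpow_sub hx0, Real.rpow_one]; field_simp

private lemma bern_ge (p x : ℝ) (hp : 1 ≤ p) (hx : 1 ≤ x) :
    x ^ p + p * x ^ (p - 1) ≤ (x + 1) ^ p := by
  have hx0 : (0:ℝ) < x := by linarith
  have h1x : (0:ℝ) ≤ 1/x := by positivity
  have hb := one_add_mul_self_le_rpow_one_add (s := 1/x) (by linarith) hp
  have hmul : (x + 1) ^ p = x ^ p * (1 + 1/x) ^ p := by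
    rw [← Real.mul_rpow hx0.le (by positivity)]
    congr 1; field_simp
  calc x ^ p + p * x ^ (p - 1)
      = x ^ p * (1 + p * (1/x)) := by
        rw [Real.rpow_sub hx0, Real.rpow_one]; field_simp
    _ ≤ x ^ p * (1 + 1/x) ^ p :=
        mul_le_mul_of_nonneg_left hb (Real.rpow_nonneg hx0.le p)
    _ = (x + 1) ^ p := hmul.symm

private lemma icc_sum_eq (q : ℝ) (M : ℕ) :
    ∑ k ∈ Finset.Icc 1 M, (k:ℝ) ^ q = ∑ i ∈ Finset.range M, ((i:ℝ) + 1) ^ q := by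
  induction M with
  | zero => simp
  | succ n ih =>
    rw [Finset.sum_Icc_succ_top (by omega), Finset.sum_range_succ, ih]
    push_cast
    rfl

private lemma telescope_rpow (p : ℝ) (M : ℕ) :
    ∑ i ∈ Finset.range M, ((((i:ℝ) + 1) + 1) ^ p - ((i:ℝ) + 1) ^ p)
      = ((M:ℝ) + 1) ^ p - 1 := by
  have h := Finset.sum_range_sub (fun i => (((i:ℕ):ℝ) + 1) ^ p) M
  calc ∑ i ∈ Finset.range M, ((((i:ℝ) + 1) + 1) ^ p - ((i:ℝ) + 1) ^ p)
      = ∑ i ∈ Finset.range M, ((((i+1:ℕ):ℝ) + 1) ^ p - (((i:ℕ):ℝ) + 1) ^ p) := by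
        refine Finset.sum_congr rfl fun i _ => ?_; push_cast; ring_nf
    _ = (((M:ℕ):ℝ) + 1) ^ p - (((0:ℕ):ℝ) + 1) ^ p := h
    _ = ((M:ℝ) + 1) ^ p - 1 := by norm_num

private lemma sum_rpow_lower (p : ℝ) (hp0 : 0 < p) (hp1 : p ≤ 1) (M : ℕ) :
    ((M:ℝ) + 1) ^ p - 1 ≤ p * ∑ k ∈ Finset.Icc 1 M, (k:ℝ) ^ (p - 1) := by
  rw [icc_sum_eq, Finset.mul_sum, ← telescope_rpow p M]
  refine Finset.sum_le_sum fun i _ => ?_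
  have := bern_le p ((i:ℝ) + 1) hp0.le hp1 (by push_cast; linarith [Nat.cast_nonneg (α := ℝ) i])
  linarith

private lemma sum_rpow_upper (p : ℝ) (hp : 1 ≤ p) (M : ℕ) :
    p * ∑ k ∈ Finset.Icc 1 M, (k:ℝ) ^ (p - 1) ≤ ((M:ℝ) + 1) ^ p - 1 := by
  rw [icc_sum_eq, Finset.mul_sum, ← telescope_rpow p M]
  refine Finset.sum_le_sum fun i _ => ?_
  have := bern_ge p ((i:ℝ) + 1) hp (by push_cast; linarith [Nat.cast_nonneg (α := ℝ) i])
  linarith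

set_option maxHeartbeats 1000000 in
theorem attractive_energy_uniform_train_bound_m01
    (m : ℝ) (hm0 : 0 < m) (hm1 : m < 1) (N : ℕ) (hN : 2 ≤ N)
    (α : ℝ) (hα0 : 0 < α) (hα1 : α ≤ 1) (l₀ : ℝ) (hl₀ : 0 < l₀) :
    (1 / m) * l₀ ^ (-m) *
        (∑ k ∈ Finset.Icc 1 ⌊(N : ℝ) ^ α⌋₊, (k : ℝ) ^ (1 - m) -
          (N : ℝ) * ∑ k ∈ Finset.Icc 1 ⌊(N : ℝ) ^ α⌋₊, (k : ℝ) ^ (-m)) ≤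
      -(1 / (m * (1 - m) * (2 - m))) * l₀ ^ (-m) * (N : ℝ) ^ (1 + α * (1 - m)) +
        (3 / (m * (1 - m))) * l₀ ^ (-m) * (N : ℝ) := by
  set M := ⌊(N : ℝ) ^ α⌋₊ with hM
  set S₁ := ∑ k ∈ Finset.Icc 1 M, (k : ℝ) ^ (1 - m) with hS₁def
  set S₀ := ∑ k ∈ Finset.Icc 1 M, (k : ℝ) ^ (-m) with hS₀def
  have hNR : (2:ℝ) ≤ (N:ℝ) := by exact_mod_cast hN
  have hN1 : (1:ℝ) < (N:ℝ) := by linarith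
  have hN0 : (0:ℝ) < (N:ℝ) := by linarith
  have hu : (0:ℝ) < 1 - m := by linarith
  have hv : (1:ℝ) ≤ 2 - m := by linarith
  have hv0 : (0:ℝ) < 2 - m := by linarith
  -- basic facts about N^α and M
  have hNα0 : (0:ℝ) < (N:ℝ) ^ α := Real.rpow_pos_of_pos hN0 α
  have hNα1 : (1:ℝ) ≤ (N:ℝ) ^ α := Real.one_le_rpow hN1.le hα0.le
  have hMle : ((M:ℝ)) ≤ (N:ℝ) ^ α := Nat.floor_le hNα0.le
  have hMge : (N:ℝ) ^ α ≤ (M:ℝ) + 1 := (Nat.lt_floor_add_one _).le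
  have hNαN : (N:ℝ) ^ α ≤ (N:ℝ) := by
    calc (N:ℝ) ^ α ≤ (N:ℝ) ^ (1:ℝ) := Real.rpow_le_rpow_of_exponent_le hN1.le hα1
      _ = (N:ℝ) := Real.rpow_one _
  set B := ((M:ℝ)) + 1 with hB
  have hB1 : (1:ℝ) ≤ B := by rw [hB]; linarith [Nat.cast_nonneg (α := ℝ) M]
  -- abbreviations
  set X := (N:ℝ) ^ (1 + α * (1 - m)) with hX
  set A := (N:ℝ) ^ (α * (1 - m)) with hA
  have hYA : (N:ℝ) * A = X := by
    rw [hA, hX, ← Real.rpow_one_add' hN0.le (by positivity)]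
  -- (a1) lower bound for S₀
  have a1 : B ^ (1 - m) - 1 ≤ (1 - m) * S₀ := by
    have := sum_rpow_lower (1 - m) hu (by linarith) M
    have he : (1 - m) - 1 = -m := by ring
    rw [he] at this
    exact this
  -- (a2) upper bound for S₁
  have a2 : (2 - m) * S₁ ≤ B ^ (2 - m) - 1 := by
    have := sum_rpow_upper (2 - m) hv M
    have he : (2 - m) - 1 = 1 - m := by ring
    rw [he] at this
    exact this
  -- (a3) A ≤ B ^ (1 - m)
  have a3 : A ≤ B ^ (1 - m) := by
    calc A = ((N:ℝ) ^ α) ^ (1 - m) := by rw [hA, Real.rpow_mul hN0.le]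
      _ ≤ B ^ (1 - m) := Real.rpow_le_rpow hNα0.le hMge hu.le
  -- (a4) B ^ (2 - m) ≤ X + 2 * (2 - m) * N
  have a4 : B ^ (2 - m) ≤ X + (2 - m) * (2 * (N:ℝ)) := by
    set a := (N:ℝ) ^ α with ha
    set c := a + 1 with hc
    have hc1 : (1:ℝ) ≤ c := by simp [hc]; linarith
    have hc0 : (0:ℝ) < c := by linarith
    have hBc : B ≤ c := by simp [hB, hc]; linarith
    have hBv : B ^ (2 - m) ≤ c ^ (2 - m) :=
      Real.rpow_le_rpow (by positivity) hBc hv0.le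
    -- c^(2-m) ≤ a^(2-m) + (2-m) * c^(1-m)
    have hbern : c ^ (2 - m) ≤ a ^ (2 - m) + (2 - m) * c ^ (1 - m) := by
      have hb := one_add_mul_self_le_rpow_one_add (s := -(1/c)) (by
        have : 1/c ≤ 1 := by rw [div_le_one hc0]; linarith
        linarith) hv
      have hpow : (1 + -(1/c)) ^ (2 - m) = a ^ (2 - m) / c ^ (2 - m) := by
        rw [← Real.div_rpow (by positivity) hc0.le]
        congr 1
        field_simp [hc]
        linarith
      rw [hpow] at hb
      rw [le_div_iff₀ (by positivity : (0:ℝ) < c ^ (2 - m))] at hb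
      have hkey : c ^ (2 - m) * (1/c) = c ^ (1 - m) := by
        rw [one_div, ← Real.rpow_neg_one c, ← Real.rpow_add hc0]
        congr 1
        ring
      nlinarith [hb, hkey]
    have hc1m : c ^ (1 - m) ≤ 2 * (N:ℝ) := by
      calc c ^ (1 - m) ≤ c ^ (1:ℝ) :=
            Real.rpow_le_rpow_of_exponent_le hc1 (by linarith)
        _ = c := Real.rpow_one _
        _ ≤ 2 * (N:ℝ) := by simp [hc, ha]; linarith
    have hav : a ^ (2 - m) ≤ X := by
      calc a ^ (2 - m) = (N:ℝ) ^ (α * (2 - m)) := by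
            rw [ha, ← Real.rpow_mul hN0.le]
        _ ≤ X := by
            rw [hX]
            apply Real.rpow_le_rpow_of_exponent_le hN1.le
            nlinarith
    linarith [hBv, hbern, hav, mul_le_mul_of_nonneg_left hc1m hv0.le]
  -- key estimate
  have key : (1 - m) * (2 - m) * (S₁ - (N:ℝ) * S₀) ≤ -X + 3 * (2 - m) * (N:ℝ) := by
    have hS₀' : A - 1 ≤ (1 - m) * S₀ := by linarith
    have hS₁' : (2 - m) * S₁ ≤ X + (2 - m) * (2 * (N:ℝ)) - 1 := by linarith
    nlinarith [mul_le_mul_of_nonneg_left hS₁' hu.le,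
      mul_nonneg (mul_nonneg hv0.le hN0.le) (by linarith : (0:ℝ) ≤ (1 - m) * S₀ - A + 1),
      hYA, mul_nonneg (mul_nonneg hm0.le hv0.le) hN0.le]
  -- assemble
  have hL : (0:ℝ) < l₀ ^ (-m) := Real.rpow_pos_of_pos hl₀ _
  have hpos : (0:ℝ) < (1 / m) * l₀ ^ (-m) := by positivity
  have h2 : S₁ - (N:ℝ) * S₀ ≤ (-X + 3 * (2 - m) * (N:ℝ)) / ((1 - m) * (2 - m)) := by
    rw [le_div_iff₀ (by positivity)]
    linarith [key]
  calc (1 / m) * l₀ ^ (-m) * (S₁ - (N:ℝ) * S₀)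
      ≤ (1 / m) * l₀ ^ (-m) * ((-X + 3 * (2 - m) * (N:ℝ)) / ((1 - m) * (2 - m))) :=
        mul_le_mul_of_nonneg_left h2 hpos.le
    _ = -(1 / (m * (1 - m) * (2 - m))) * l₀ ^ (-m) * X +
        (3 / (m * (1 - m))) * l₀ ^ (-m) * (N:ℝ) := by
        field_simp
end
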